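/- Let E be a countable set, let P and P̃ be irreducible stochastic matrices on E, and let π and ν be invariant probability vectors for P and P̃ respectively. Let i₀ ∈ E and suppose P satisfies the drift condition D1(V,{i₀}) with a bounded nonnegative function V. Then ‖ν − π‖ ≤ 2 (sup_i V(i))² · ‖P̃ − P‖. -/

import Mathlib

open scoped Classical ENNReal NNReal
open Filter MeasureTheory

noncomputable section

variable {E : Type*}

def matPow (P : E → E → ℝ) : ℕ → E → E → ℝ
  | 0 => fun i j => if i = j then (1 : ℝ) else 0
  | n + 1 => fun i j => ∑' k, matPow P n i k * P k j

def IsStochastic (P : E → E → ℝ) : Prop :=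
  (∀ i j, 0 ≤ P i j) ∧ ∀ i, ∑' j, P i j = 1

def IsIrred (P : E → E → ℝ) : Prop :=
  ∀ i j, ∃ n, 1 ≤ n ∧ 0 < matPow P n i j

def IsProbVec (π : E → ℝ) : Prop :=
  (∀ i, 0 ≤ π i) ∧ ∑' i, π i = 1

def InvariantFor (π : E → ℝ) (P : E → E → ℝ) : Prop :=
  ∀ j, HasSum (fun i => π i * P i j) (π j)

def vecNorm (μ : E → ℝ) : ℝ := ∑' i, |μ i|

def rowSumNorm (L : E → E → ℝ) : ℝ := ⨆ i, ∑' j, |L i j|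

def ergCoeff (B : E → E → ℝ) : ℝ :=
  (1 / 2) * ⨆ p : E × E, ∑' k, |B p.1 k - B p.2 k|

def IsIntensity (Q : E → E → ℝ) : Prop :=
  (∀ i j, i ≠ j → 0 ≤ Q i j) ∧ ∀ i, HasSum (Q i) 0

def UnifBdd (Q : E → E → ℝ) : Prop := ∃ M : ℝ, ∀ i, -Q i i ≤ M

def QIrred (Q : E → E → ℝ) : Prop :=
  ∀ i j, i ≠ j → ∃ (r : ℕ) (k : ℕ → E), 1 ≤ r ∧ k 0 = i ∧ k r = j ∧
    ∀ s < r, 0 < Q (k s) (k (s + 1))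

def QInvariant (π : E → ℝ) (Q : E → E → ℝ) : Prop :=
  ∀ j, HasSum (fun i => π i * Q i j) 0

def transP (Q : E → E → ℝ) (t : ℝ) : E → E → ℝ :=
  fun i j => ∑' n : ℕ, t ^ n / (Nat.factorial n : ℝ) * matPow Q n i j

def qErgCoeff (Q : E → E → ℝ) : ℝ :=
  (1 / 2) * ⨅ p : {p : E × E // p.1 ≠ p.2},
    (|Q p.val.1 p.val.1 - Q p.val.2 p.val.1| + |Q p.val.1 p.val.2 - Q p.val.2 p.val.2|
      - ∑' s : E, if s ≠ p.val.1 ∧ s ≠ p.val.2 then |Q p.val.1 s - Q p.val.2 s| else 0)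

def vVecNorm (V : E → ℝ) (μ : E → ℝ) : ℝ≥0∞ := ∑' i, ENNReal.ofReal (|μ i| * V i)

def vMatNorm (V : E → ℝ) (L : E → E → ℝ) : ℝ≥0∞ :=
  ⨆ i, (∑' j, ENNReal.ofReal (|L i j| * V j)) / ENNReal.ofReal (V i)

def vOneNorm (V : E → ℝ) : ℝ≥0∞ := ⨆ i, 1 / ENNReal.ofReal (V i)

section Stmt8Aux

variable {E : Type*}

private lemma aux8_summable_of_tsum_ne_zero {f : E → ℝ} (h : ∑' i, f i ≠ 0) : Summable f := by
  by_contra hs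
  exact h (tsum_eq_zero_of_not_summable hs)

private lemma aux8_abs_tsum_le {f : E → ℝ} (hf : Summable fun i => |f i|) :
    |∑' i, f i| ≤ ∑' i, |f i| := by
  have h : Summable fun i => ‖f i‖ := by simpa only [Real.norm_eq_abs] using hf
  have h2 := norm_tsum_le_tsum_norm h
  simpa only [Real.norm_eq_abs] using h2

private lemma aux8_fubini {α β : Type*} (F G : α → β → ℝ)
    (hFG : ∀ a b, |F a b| ≤ G a b)
    (hG1 : ∀ a, Summable (G a))
    (hG2 : Summable fun a => ∑' b, G a b) :
    Summable (fun a => ∑' b, F a b) ∧ Summable (fun b => ∑' a, F a b) ∧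
      ∑' a, ∑' b, F a b = ∑' b, ∑' a, F a b := by
  have hGnn : ∀ p : α × β, 0 ≤ Function.uncurry G p :=
    fun p => (abs_nonneg _).trans (hFG p.1 p.2)
  have hGu : Summable (Function.uncurry G) :=
    (summable_prod_of_nonneg hGnn).2 ⟨hG1, hG2⟩
  have habs : Summable fun p : α × β => |Function.uncurry F p| :=
    Summable.of_nonneg_of_le (fun p => abs_nonneg _) (fun p => hFG p.1 p.2) hGu
  have hFu : Summable (Function.uncurry F) := habs.of_abs
  have habs_row : ∀ a, Summable fun b => |F a b| :=
    fun a => Summable.of_nonneg_of_le (fun b => abs_nonneg _) (hFG a) (hG1 a)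
  refine ⟨?_, ?_, ?_⟩
  · apply Summable.of_norm_bounded hG2
    intro a
    rw [Real.norm_eq_abs]
    calc |∑' b, F a b| ≤ ∑' b, |F a b| := aux8_abs_tsum_le (habs_row a)
      _ ≤ ∑' b, G a b := Summable.tsum_le_tsum (hFG a) (habs_row a) (hG1 a)
  · exact (hFu.prod_symm.hasSum.prod_fiberwise
      (fun b => (hFu.prod_symm.prod_factor b).hasSum)).summable
  · exact (Summable.tsum_comm hFu).symm

end Stmt8Aux

section Stmt8Top

variable {E : Type*}

private def aux8T (P : E → E → ℝ) (i₀ : E) (w : E → ℝ) : E → ℝ :=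
  fun i => if i = i₀ then 0 else ∑' j, P i j * w j

variable {P : E → E → ℝ} {i₀ : E}

private lemma aux8_summable_mul_bd (hPnn : ∀ i j, 0 ≤ P i j) (hPs : ∀ i, Summable (P i))
    {w : E → ℝ} {C : ℝ} (hw : ∀ j, |w j| ≤ C) (i : E) :
    Summable fun j => P i j * w j := by
  apply Summable.of_abs
  apply Summable.of_nonneg_of_le (fun j => abs_nonneg _) (fun j => ?_) ((hPs i).mul_right C)
  rw [abs_mul, abs_of_nonneg (hPnn i j)]
  exact mul_le_mul_of_nonneg_left (hw j) (hPnn i j)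

private lemma aux8_row_mul_bd (hPnn : ∀ i j, 0 ≤ P i j) (hPs : ∀ i, Summable (P i))
    (hProw : ∀ i, ∑' j, P i j = 1)
    {w : E → ℝ} {C : ℝ} (hw : ∀ j, |w j| ≤ C) (i : E) :
    |∑' j, P i j * w j| ≤ C := by
  have hs : Summable fun j => |P i j * w j| := by
    apply Summable.of_nonneg_of_le (fun j => abs_nonneg _) (fun j => ?_) ((hPs i).mul_right C)
    rw [abs_mul, abs_of_nonneg (hPnn i j)]
    exact mul_le_mul_of_nonneg_left (hw j) (hPnn i j)
  calc |∑' j, P i j * w j| ≤ ∑' j, |P i j * w j| := aux8_abs_tsum_le hs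
    _ ≤ ∑' j, P i j * C := by
        apply Summable.tsum_le_tsum (fun j => ?_) hs ((hPs i).mul_right C)
        rw [abs_mul, abs_of_nonneg (hPnn i j)]
        exact mul_le_mul_of_nonneg_left (hw j) (hPnn i j)
    _ = C := by rw [tsum_mul_right, hProw i, one_mul]

private lemma aux8T_bd (hPnn : ∀ i j, 0 ≤ P i j) (hPs : ∀ i, Summable (P i))
    (hProw : ∀ i, ∑' j, P i j = 1)
    {w : E → ℝ} {C : ℝ} (hC : 0 ≤ C) (hw : ∀ j, |w j| ≤ C) (i : E) :
    |aux8T P i₀ w i| ≤ C := by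
  unfold aux8T
  by_cases hi : i = i₀
  · simpa [hi] using hC
  · rw [if_neg hi]
    have hs : Summable fun j => |P i j * w j| := by
      apply Summable.of_nonneg_of_le (fun j => abs_nonneg _) (fun j => ?_) ((hPs i).mul_right C)
      rw [abs_mul, abs_of_nonneg (hPnn i j)]
      exact mul_le_mul_of_nonneg_left (hw j) (hPnn i j)
    calc |∑' j, P i j * w j| ≤ ∑' j, |P i j * w j| := aux8_abs_tsum_le hs
      _ ≤ ∑' j, P i j * C := by
          apply Summable.tsum_le_tsum (fun j => ?_) hs ((hPs i).mul_right C)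
          rw [abs_mul, abs_of_nonneg (hPnn i j)]
          exact mul_le_mul_of_nonneg_left (hw j) (hPnn i j)
      _ = C := by rw [tsum_mul_right, hProw i, one_mul]

private lemma aux8T_nonneg {w : E → ℝ} (hPnn : ∀ i j, 0 ≤ P i j)
    (hw : ∀ j, 0 ≤ w j) (i : E) : 0 ≤ aux8T P i₀ w i := by
  unfold aux8T
  by_cases hi : i = i₀
  · simp [hi]
  · rw [if_neg hi]
    exact tsum_nonneg fun j => mul_nonneg (hPnn i j) (hw j)

private lemma aux8T_dom (hPnn : ∀ i j, 0 ≤ P i j) (hPs : ∀ i, Summable (P i))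
    {w w' : E → ℝ} {a C : ℝ} (ha : 0 ≤ a) (hww' : ∀ j, |w j| ≤ a * w' j)
    (hw'nn : ∀ j, 0 ≤ w' j) (hw'C : ∀ j, w' j ≤ C) (i : E) :
    |aux8T P i₀ w i| ≤ a * aux8T P i₀ w' i := by
  unfold aux8T
  by_cases hi : i = i₀
  · simp [hi]
  · rw [if_neg hi, if_neg hi]
    have hsw' : Summable fun j => P i j * w' j :=
      aux8_summable_mul_bd hPnn hPs (fun j => by
        rw [abs_of_nonneg (hw'nn j)]; exact hw'C j) i
    have hs : Summable fun j => |P i j * w j| := by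
      apply Summable.of_nonneg_of_le (fun j => abs_nonneg _) (fun j => ?_) (hsw'.mul_left a)
      rw [abs_mul, abs_of_nonneg (hPnn i j), mul_left_comm]
      exact mul_le_mul_of_nonneg_left (hww' j) (hPnn i j)
    calc |∑' j, P i j * w j| ≤ ∑' j, |P i j * w j| := aux8_abs_tsum_le hs
      _ ≤ ∑' j, a * (P i j * w' j) := by
          apply Summable.tsum_le_tsum (fun j => ?_) hs (hsw'.mul_left a)
          rw [abs_mul, abs_of_nonneg (hPnn i j), mul_left_comm]
          exact mul_le_mul_of_nonneg_left (hww' j) (hPnn i j)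
      _ = a * ∑' j, P i j * w' j := tsum_mul_left

private lemma aux8T_mono (hPnn : ∀ i j, 0 ≤ P i j) (hPs : ∀ i, Summable (P i))
    {w w' : E → ℝ} {C : ℝ} (hwnn : ∀ j, 0 ≤ w j) (hww' : ∀ j, w j ≤ w' j)
    (hw'C : ∀ j, w' j ≤ C) (i : E) :
    aux8T P i₀ w i ≤ aux8T P i₀ w' i := by
  have h := aux8T_dom (i₀ := i₀) hPnn hPs (zero_le_one) (w := w) (w' := w')
    (fun j => by rw [one_mul, abs_of_nonneg (hwnn j)]; exact hww' j)
    (fun j => le_trans (hwnn j) (hww' j)) hw'C i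
  rw [one_mul] at h
  exact (abs_le.mp h).2

end Stmt8Top

section Stmt8MatPow

variable {E : Type*} {P : E → E → ℝ}

private lemma aux8_matPow_nonneg (hPnn : ∀ i j, 0 ≤ P i j) :
    ∀ n i j, 0 ≤ matPow P n i j := by
  intro n
  induction n with
  | zero => intro i j; unfold matPow; split <;> norm_num
  | succ n ih =>
      intro i j
      unfold matPow
      exact tsum_nonneg fun k => mul_nonneg (ih i k) (hPnn k j)

private lemma aux8_matPow_row (hPnn : ∀ i j, 0 ≤ P i j) (hPs : ∀ i, Summable (P i))
    (hProw : ∀ i, ∑' j, P i j = 1) :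
    ∀ n i, Summable (matPow P n i) ∧ ∑' j, matPow P n i j = 1 := by
  intro n
  induction n with
  | zero =>
      intro i
      constructor
      · apply summable_of_ne_finset_zero (s := {i})
        intro j hj
        simp only [Finset.mem_singleton] at hj
        unfold matPow
        rw [if_neg (fun h => hj h.symm)]
      · unfold matPow
        calc ∑' j, (if i = j then (1:ℝ) else 0) = ∑' j, (if j = i then (1:ℝ) else 0) := by
              apply tsum_congr; intro j; simp [eq_comm]
          _ = 1 := tsum_ite_eq i 1
  | succ n ih =>
      intro i
      have hF := aux8_fubini (fun k j => matPow P n i k * P k j)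
        (fun k j => matPow P n i k * P k j)
        (fun k j => le_of_eq (abs_of_nonneg
          (mul_nonneg (aux8_matPow_nonneg hPnn n i k) (hPnn k j))))
        (fun k => (hPs k).mul_left _)
        (by
          have : (fun k => ∑' j, matPow P n i k * P k j) = fun k => matPow P n i k := by
            funext k; rw [tsum_mul_left, hProw k, mul_one]
          rw [this]; exact (ih i).1)
      have hsum : (fun j => matPow P (n+1) i j) = fun j => ∑' k, matPow P n i k * P k j := by
        funext j; simp only [matPow]
      constructor
      · rw [show (matPow P (n+1) i) = fun j => ∑' k, matPow P n i k * P k j from hsum]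
        exact hF.2.1
      · calc ∑' j, matPow P (n+1) i j = ∑' j, ∑' k, matPow P n i k * P k j := by rw [hsum]
          _ = ∑' k, ∑' j, matPow P n i k * P k j := hF.2.2.symm
          _ = ∑' k, matPow P n i k := by
              apply tsum_congr; intro k; rw [tsum_mul_left, hProw k, mul_one]
          _ = 1 := (ih i).2

private lemma aux8_matPow_le_one (hPnn : ∀ i j, 0 ≤ P i j) (hPs : ∀ i, Summable (P i))
    (hProw : ∀ i, ∑' j, P i j = 1) (n : ℕ) (i j : E) : matPow P n i j ≤ 1 := by
  have h := aux8_matPow_row hPnn hPs hProw n i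
  calc matPow P n i j ≤ ∑' k, matPow P n i k :=
        Summable.le_tsum h.1 j (fun k _ => aux8_matPow_nonneg hPnn n i k)
    _ = 1 := h.2

private lemma aux8_matPow_inv {pi : E → ℝ} (hPnn : ∀ i j, 0 ≤ P i j)
    (hPs : ∀ i, Summable (P i)) (hProw : ∀ i, ∑' j, P i j = 1)
    (hπnn : ∀ i, 0 ≤ pi i) (hπs : Summable pi) (hpiinv : InvariantFor pi P) :
    ∀ n j, Summable (fun i => pi i * matPow P n i j) ∧
      ∑' i, pi i * matPow P n i j = pi j := by
  have hsum : ∀ n j, Summable fun i => pi i * matPow P n i j := by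
    intro n j
    apply Summable.of_nonneg_of_le
      (fun i => mul_nonneg (hπnn i) (aux8_matPow_nonneg hPnn n i j))
      (fun i => ?_) hπs
    calc pi i * matPow P n i j ≤ pi i * 1 :=
          mul_le_mul_of_nonneg_left (aux8_matPow_le_one hPnn hPs hProw n i j) (hπnn i)
      _ = pi i := mul_one _
  intro n
  induction n with
  | zero =>
      intro j
      refine ⟨hsum 0 j, ?_⟩
      have : (fun i => pi i * matPow P 0 i j) = fun i => if i = j then pi j else 0 := by
        funext i
        unfold matPow
        by_cases h : i = j <;> simp [h]
      rw [this, tsum_ite_eq]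
  | succ n ih =>
      intro j
      refine ⟨hsum (n+1) j, ?_⟩
      have hF := aux8_fubini (fun i k => pi i * (matPow P n i k * P k j))
        (fun i k => pi i * (matPow P n i k * P k j))
        (fun i k => le_of_eq (abs_of_nonneg (mul_nonneg (hπnn i)
          (mul_nonneg (aux8_matPow_nonneg hPnn n i k) (hPnn k j)))))
        (fun i => by
          apply Summable.of_nonneg_of_le (fun k => mul_nonneg (hπnn i)
            (mul_nonneg (aux8_matPow_nonneg hPnn n i k) (hPnn k j)))
            (fun k => ?_) (((aux8_matPow_row hPnn hPs hProw n i).1).mul_left (pi i))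
          rw [mul_comm (matPow P n i k) (P k j)]
          calc pi i * (P k j * matPow P n i k) ≤ pi i * (1 * matPow P n i k) := by
                apply mul_le_mul_of_nonneg_left _ (hπnn i)
                exact mul_le_mul_of_nonneg_right
                  (le_trans (Summable.le_tsum (hPs k) j (fun m _ => hPnn k m)) (le_of_eq (hProw k)))
                  (aux8_matPow_nonneg hPnn n i k)
            _ = pi i * matPow P n i k := by ring)
        (by
          have heq : (fun i => ∑' k, pi i * (matPow P n i k * P k j)) =
              fun i => pi i * matPow P (n+1) i j := by
            funext i
            rw [tsum_mul_left]
            simp only [matPow]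
          rw [heq]
          exact hsum (n+1) j)
      calc ∑' i, pi i * matPow P (n+1) i j
          = ∑' i, ∑' k, pi i * (matPow P n i k * P k j) := by
            apply tsum_congr; intro i
            simp only [matPow, tsum_mul_left]
        _ = ∑' k, ∑' i, pi i * (matPow P n i k * P k j) := hF.2.2
        _ = ∑' k, (∑' i, pi i * matPow P n i k) * P k j := by
            apply tsum_congr; intro k
            rw [← tsum_mul_right]
            apply tsum_congr; intro i; ring
        _ = ∑' k, pi k * P k j := by
            apply tsum_congr; intro k; rw [(ih k).2]
        _ = pi j := (hpiinv j).tsum_eq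

end Stmt8MatPow

set_option maxHeartbeats 2000000 in
/-- under D1(V,{i₀}), ‖ν − π‖ ≤ 2(sup V)²·‖P̃ − P‖. -/
theorem stmt8 {E : Type*} [Countable E] (P Pt : E → E → ℝ) (pi nu : E → ℝ)
    (i₀ : E) (V : E → ℝ)
    (hP : IsStochastic P) (hPt : IsStochastic Pt)
    (hPirr : IsIrred P) (hPtirr : IsIrred Pt)
    (hpi : IsProbVec pi) (hnu : IsProbVec nu)
    (hpiinv : InvariantFor pi P) (hnuinv : InvariantFor nu Pt)
    (hVnn : ∀ i, 0 ≤ V i) (hVbd : BddAbove (Set.range V)) (hV0 : V i₀ = 0)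
    (hdrift : ∀ i, i ≠ i₀ → ∑' j, P i j * V j ≤ V i - 1) :
    vecNorm (fun i => nu i - pi i) ≤
      2 * (⨆ i, V i) ^ 2 * rowSumNorm (fun i j => Pt i j - P i j) := by
  classical
  obtain ⟨hPnn, hProw⟩ := hP
  obtain ⟨hPtnn, hPtrow⟩ := hPt
  obtain ⟨hπnn, hπ1⟩ := hpi
  obtain ⟨hνnn, hν1⟩ := hnu
  have hπs : Summable pi := aux8_summable_of_tsum_ne_zero (by rw [hπ1]; norm_num)
  have hνs : Summable nu := aux8_summable_of_tsum_ne_zero (by rw [hν1]; norm_num)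
  have hPs : ∀ i, Summable (P i) :=
    fun i => aux8_summable_of_tsum_ne_zero (by rw [hProw i]; norm_num)
  have hPts : ∀ i, Summable (Pt i) :=
    fun i => aux8_summable_of_tsum_ne_zero (by rw [hPtrow i]; norm_num)
  have hE : Nonempty E := by
    by_contra hne
    rw [not_nonempty_iff] at hne
    rw [tsum_empty] at hπ1
    norm_num at hπ1
  set M : ℝ := ⨆ i, V i with hMdef
  have hVM : ∀ i, V i ≤ M := fun i => le_ciSup hVbd i
  -- Δ row sums
  have hΔs : ∀ i, Summable fun j => |Pt i j - P i j| := by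
    intro i
    apply Summable.of_nonneg_of_le (fun j => abs_nonneg _) (fun j => ?_) ((hPts i).add (hPs i))
    calc |Pt i j - P i j| ≤ |Pt i j| + |P i j| := abs_sub _ _
      _ = Pt i j + P i j := by rw [abs_of_nonneg (hPtnn i j), abs_of_nonneg (hPnn i j)]
  have hΔrow2 : ∀ i, ∑' j, |Pt i j - P i j| ≤ 2 := by
    intro i
    calc ∑' j, |Pt i j - P i j| ≤ ∑' j, (Pt i j + P i j) := by
          apply Summable.tsum_le_tsum (fun j => ?_) (hΔs i) ((hPts i).add (hPs i))
          calc |Pt i j - P i j| ≤ |Pt i j| + |P i j| := abs_sub _ _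
            _ = Pt i j + P i j := by rw [abs_of_nonneg (hPtnn i j), abs_of_nonneg (hPnn i j)]
      _ = 2 := by rw [Summable.tsum_add (hPts i) (hPs i), hProw i, hPtrow i]; norm_num
  set δ : ℝ := rowSumNorm (fun i j => Pt i j - P i j) with hδdef
  have hrowδ : ∀ i, ∑' j, |Pt i j - P i j| ≤ δ := by
    intro i
    apply le_ciSup (f := fun i => ∑' j, |Pt i j - P i j|) ?_ i
    exact ⟨2, by rintro x ⟨i', rfl⟩; exact hΔrow2 i'⟩
  have hδnn : 0 ≤ δ :=
    le_trans (tsum_nonneg fun j => abs_nonneg _) (hrowδ hE.some)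
  by_cases hsing : ∀ i : E, i = i₀
  · -- degenerate case: E has a single element
    have hnupi : ∀ i : E, nu i = pi i := by
      intro i
      have h1 : nu i = 1 := by
        rw [← hν1]
        exact (tsum_eq_single i fun j hj =>
          absurd ((hsing j).trans (hsing i).symm) hj).symm
      have h2 : pi i = 1 := by
        rw [← hπ1]
        exact (tsum_eq_single i fun j hj =>
          absurd ((hsing j).trans (hsing i).symm) hj).symm
      rw [h1, h2]
    have hlhs : vecNorm (fun i => nu i - pi i) = 0 := by
      unfold vecNorm
      have heq : (fun i => |nu i - pi i|) = fun _ => (0 : ℝ) := by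
        funext i; rw [hnupi i]; simp
      rw [heq, tsum_zero]
    rw [hlhs]
    positivity
  · push_neg at hsing
    obtain ⟨i₁, hi₁⟩ := hsing
    have hVge1 : ∀ i, i ≠ i₀ → 1 ≤ V i := by
      intro i hi
      have hd := hdrift i hi
      have h0 : 0 ≤ ∑' j, P i j * V j :=
        tsum_nonneg fun j => mul_nonneg (hPnn i j) (hVnn j)
      linarith
    have hM1 : 1 ≤ M := le_trans (hVge1 i₁ hi₁) (hVM i₁)
    have hMnn : 0 ≤ M := by linarith
    -- general summability helper
    have hmulbd : ∀ (μ w : E → ℝ) (C : ℝ), Summable μ → (∀ i, 0 ≤ μ i) →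
        (∀ i, |w i| ≤ C) → Summable fun i => μ i * w i := by
      intro μ w C hμs hμnn hw
      apply Summable.of_abs
      apply Summable.of_nonneg_of_le (fun i => abs_nonneg _) (fun i => ?_) (hμs.mul_right C)
      rw [abs_mul, abs_of_nonneg (hμnn i)]
      exact mul_le_mul_of_nonneg_left (hw i) (hμnn i)
    -- the sign function
    set f : E → ℝ := fun i => if nu i - pi i < 0 then -1 else 1 with hfdef
    have hf1 : ∀ i, |f i| ≤ 1 := by
      intro i; simp only [hfdef]; split <;> simp
    set c : ℝ := ∑' i, pi i * f i with hcdef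
    have hπfs : Summable fun i => pi i * f i := hmulbd pi f 1 hπs hπnn hf1
    have hc1 : |c| ≤ 1 := by
      have habs : Summable fun i => |pi i * f i| := by
        apply Summable.of_nonneg_of_le (fun i => abs_nonneg _) (fun i => ?_) hπs
        rw [abs_mul, abs_of_nonneg (hπnn i)]
        calc pi i * |f i| ≤ pi i * 1 := mul_le_mul_of_nonneg_left (hf1 i) (hπnn i)
          _ = pi i := mul_one _
      rw [hcdef]
      calc |∑' i, pi i * f i| ≤ ∑' i, |pi i * f i| := aux8_abs_tsum_le habs
        _ ≤ ∑' i, pi i := by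
            apply Summable.tsum_le_tsum (fun i => ?_) habs hπs
            rw [abs_mul, abs_of_nonneg (hπnn i)]
            calc pi i * |f i| ≤ pi i * 1 := mul_le_mul_of_nonneg_left (hf1 i) (hπnn i)
              _ = pi i := mul_one _
        _ = 1 := hπ1
    set g : E → ℝ := fun i => if i = i₀ then 0 else f i - c with hgdef
    set g1 : E → ℝ := fun i => if i = i₀ then 0 else 1 with hg1def
    set T : (E → ℝ) → E → ℝ := aux8T P i₀ with hTdef
    set A : ℕ → E → ℝ := fun n => T^[n] g with hAdef
    set B : ℕ → E → ℝ := fun n => T^[n] g1 with hBdef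
    have hA0 : A 0 = g := rfl
    have hB0 : B 0 = g1 := rfl
    have hAsucc : ∀ n, A (n + 1) = T (A n) := by
      intro n; simp only [hAdef]; exact Function.iterate_succ_apply' T n g
    have hBsucc : ∀ n, B (n + 1) = T (B n) := by
      intro n; simp only [hBdef]; exact Function.iterate_succ_apply' T n g1
    have hg1nn : ∀ i, 0 ≤ g1 i := by
      intro i; simp only [hg1def]; split <;> norm_num
    have hg1le : ∀ i, g1 i ≤ 1 := by
      intro i; simp only [hg1def]; split <;> norm_num
    have hg2 : ∀ i, |g i| ≤ 2 * g1 i := by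
      intro i; simp only [hgdef, hg1def]
      by_cases hi : i = i₀
      · simp [hi]
      · rw [if_neg hi, if_neg hi, mul_one]
        calc |f i - c| ≤ |f i| + |c| := abs_sub _ _
          _ ≤ 2 := by linarith [hf1 i, hc1]
    have hB : ∀ n, (∀ i, 0 ≤ B n i) ∧ ∀ i, B n i ≤ 1 := by
      intro n
      induction n with
      | zero => exact ⟨hg1nn, hg1le⟩
      | succ n ih =>
          rw [hBsucc n, hTdef]
          constructor
          · intro i; exact aux8T_nonneg hPnn ih.1 i
          · intro i
            have hb := aux8T_bd (i₀ := i₀) hPnn hPs hProw zero_le_one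
              (w := B n) (fun j => by rw [abs_of_nonneg (ih.1 j)]; exact ih.2 j) i
            exact (abs_le.mp hb).2
    have hAbd : ∀ n i, |A n i| ≤ 2 * B n i := by
      intro n
      induction n with
      | zero => exact hg2
      | succ n ih =>
          intro i
          rw [hAsucc n, hBsucc n, hTdef]
          exact aux8T_dom hPnn hPs (by norm_num) ih (hB n).1 (hB n).2 i
    -- partial sums of B are bounded by V
    have hSle : ∀ N i, ∑ n ∈ Finset.range (N + 1), B n i ≤ V i := by
      intro N
      induction N with
      | zero =>
          intro i
          rw [Finset.sum_range_one]
          by_cases hi : i = i₀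
          · simp only [hB0, hg1def, if_pos hi, hi, hV0]
            exact le_refl 0
          · simp only [hB0, hg1def, if_neg hi]
            exact hVge1 i hi
      | succ N ih =>
          intro i
          have hSnn : ∀ j, 0 ≤ ∑ n ∈ Finset.range (N + 1), B n j :=
            fun j => Finset.sum_nonneg fun n _ => (hB n).1 j
          have hsplit : ∑ n ∈ Finset.range (N + 2), B n i =
              g1 i + ∑ n ∈ Finset.range (N + 1), B (n + 1) i := by
            rw [Finset.sum_range_succ']
            rw [hB0, add_comm]
          have hTsum : ∑ n ∈ Finset.range (N + 1), B (n + 1) i =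
              T (fun j => ∑ n ∈ Finset.range (N + 1), B n j) i := by
            by_cases hi : i = i₀
            · have hz : ∀ n, B (n + 1) i = 0 := by
                intro n; rw [hBsucc n, hTdef]; simp [aux8T, hi]
              simp only [hz, Finset.sum_const_zero]
              rw [hTdef]; simp [aux8T, hi]
            · have he : ∀ n, B (n + 1) i = ∑' j, P i j * B n j := by
                intro n; rw [hBsucc n, hTdef]; simp [aux8T, hi]
              rw [hTdef]
              simp only [he]
              have : aux8T P i₀ (fun j => ∑ n ∈ Finset.range (N + 1), B n j) i =
                  ∑' j, P i j * ∑ n ∈ Finset.range (N + 1), B n j := by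
                simp [aux8T, hi]
              rw [this]
              rw [show (fun j => P i j * ∑ n ∈ Finset.range (N + 1), B n j) =
                  fun j => ∑ n ∈ Finset.range (N + 1), P i j * B n j from
                  funext fun j => Finset.mul_sum _ _ _]
              rw [Summable.tsum_finsetSum (fun n _ => aux8_summable_mul_bd hPnn hPs (C := 1)
                (fun j => by rw [abs_of_nonneg ((hB n).1 j)]; exact (hB n).2 j) i)]
          rw [hsplit, hTsum]
          have hmono : T (fun j => ∑ n ∈ Finset.range (N + 1), B n j) i ≤ T V i := by
            rw [hTdef]
            exact aux8T_mono hPnn hPs hSnn ih hVM i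
          by_cases hi : i = i₀
          · have h1 : g1 i = 0 := by simp only [hg1def, if_pos hi]
            have h2 : T V i = 0 := by rw [hTdef]; simp [aux8T, hi]
            rw [h1, zero_add]
            calc T (fun j => ∑ n ∈ Finset.range (N + 1), B n j) i ≤ T V i := hmono
              _ = 0 := h2
              _ ≤ V i := hVnn i
          · have h1 : g1 i = 1 := by simp only [hg1def, if_neg hi]
            have h2 : T V i = ∑' j, P i j * V j := by rw [hTdef]; simp [aux8T, hi]
            have hd := hdrift i hi
            rw [h1]
            have := hmono
            rw [h2] at this
            linarith
    have hBsummable : ∀ i, Summable fun n => B n i := by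
      intro i
      apply summable_of_sum_range_le (c := V i) (fun n => (hB n).1 i)
      intro n
      cases n with
      | zero => simpa using hVnn i
      | succ N => exact hSle N i
    have hBtsum : ∀ i, ∑' n, B n i ≤ V i := by
      intro i
      apply Real.tsum_le_of_sum_range_le (fun n => (hB n).1 i)
      intro n
      cases n with
      | zero => simpa using hVnn i
      | succ N => exact hSle N i
    have hAabs_sum : ∀ i, Summable fun n => |A n i| := by
      intro i
      apply Summable.of_nonneg_of_le (fun n => abs_nonneg _) (fun n => hAbd n i)
        ((hBsummable i).mul_left 2)
    have hAsummable : ∀ i, Summable fun n => A n i := fun i => (hAabs_sum i).of_abs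
    set h : E → ℝ := fun i => ∑' n, A n i with hhdef
    have hAi₀ : ∀ n, A n i₀ = 0 := by
      intro n
      cases n with
      | zero => rw [hA0]; simp only [hgdef, if_pos rfl]
      | succ n => rw [hAsucc n, hTdef]; simp [aux8T]
    have hhi₀ : h i₀ = 0 := by
      rw [hhdef]
      simp only [hAi₀, tsum_zero]
    have hhabs : ∀ i, |h i| ≤ 2 * V i := by
      intro i
      rw [hhdef]
      calc |∑' n, A n i| ≤ ∑' n, |A n i| := aux8_abs_tsum_le (hAabs_sum i)
        _ ≤ ∑' n, 2 * B n i :=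
            Summable.tsum_le_tsum (fun n => hAbd n i) (hAabs_sum i) ((hBsummable i).mul_left 2)
        _ = 2 * ∑' n, B n i := tsum_mul_left
        _ ≤ 2 * V i := by linarith [hBtsum i]
    have hhM : ∀ i, |h i| ≤ 2 * M := by
      intro i
      calc |h i| ≤ 2 * V i := hhabs i
        _ ≤ 2 * M := by linarith [hVM i]
    have hPhs : ∀ i, Summable fun j => P i j * h j :=
      fun i => aux8_summable_mul_bd hPnn hPs hhM i
    have hPths : ∀ i, Summable fun j => Pt i j * h j :=
      fun i => aux8_summable_mul_bd hPtnn hPts hhM i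
    set Ph : E → ℝ := fun i => ∑' j, P i j * h j with hPhdef
    set Pth : E → ℝ := fun i => ∑' j, Pt i j * h j with hPthdef
    have hPhM : ∀ i, |Ph i| ≤ 2 * M := by
      intro i; rw [hPhdef]
      exact aux8_row_mul_bd hPnn hPs hProw hhM i
    have hPthM : ∀ i, |Pth i| ≤ 2 * M := by
      intro i; rw [hPthdef]
      exact aux8_row_mul_bd hPtnn hPts hPtrow hhM i
    -- fixed point equation
    have hfix : ∀ i, i ≠ i₀ → h i = g i + Ph i := by
      intro i hi
      have hF := aux8_fubini (fun n j => P i j * A n j) (fun n j => P i j * (2 * B n j))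
        (fun n j => by
          rw [abs_mul, abs_of_nonneg (hPnn i j)]
          exact mul_le_mul_of_nonneg_left (hAbd n j) (hPnn i j))
        (fun n => aux8_summable_mul_bd hPnn hPs (C := 2)
          (fun j => by
            rw [abs_of_nonneg (by linarith [(hB n).1 j] : (0:ℝ) ≤ 2 * B n j)]
            linarith [(hB n).2 j]) i)
        (by
          have he : (fun n => ∑' j, P i j * (2 * B n j)) = fun n => 2 * B (n + 1) i := by
            funext n
            have h1 : (fun j => P i j * (2 * B n j)) = fun j => 2 * (P i j * B n j) := by
              funext j; ring
            rw [h1, tsum_mul_left]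
            congr 1
            rw [hBsucc n, hTdef]; simp [aux8T, hi]
          rw [he]
          exact (((hBsummable i).comp_injective (add_left_injective 1)).mul_left 2))
      calc h i = A 0 i + ∑' n, A (n + 1) i := Summable.tsum_eq_zero_add (hAsummable i)
        _ = g i + ∑' n, ∑' j, P i j * A n j := by
            rw [hA0]
            congr 1
            apply tsum_congr; intro n
            rw [hAsucc n, hTdef]; simp [aux8T, hi]
        _ = g i + ∑' j, ∑' n, P i j * A n j := by rw [hF.2.2]
        _ = g i + ∑' j, P i j * h j := by
            congr 1
            apply tsum_congr; intro j
            rw [tsum_mul_left, hhdef]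
        _ = g i + Ph i := by rw [hPhdef]
    -- invariant swap identity
    have hswap : ∀ (μ : E → ℝ) (K : E → E → ℝ), (∀ i, 0 ≤ μ i) → Summable μ →
        (∀ i j, 0 ≤ K i j) → (∀ i, Summable (K i)) → (∀ i, ∑' j, K i j = 1) →
        (∀ j, HasSum (fun i => μ i * K i j) (μ j)) →
        ∑' i, μ i * (∑' j, K i j * h j) = ∑' i, μ i * h i := by
      intro μ K hμnn hμs hKnn hKs hKrow hinv
      have hF := aux8_fubini (fun i j => μ i * (K i j * h j))
        (fun i j => μ i * K i j * (2 * M))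
        (fun i j => by
          show |μ i * (K i j * h j)| ≤ μ i * K i j * (2 * M)
          rw [abs_mul, abs_mul, abs_of_nonneg (hμnn i), abs_of_nonneg (hKnn i j),
            mul_assoc]
          apply mul_le_mul_of_nonneg_left _ (hμnn i)
          exact mul_le_mul_of_nonneg_left (hhM j) (hKnn i j))
        (fun i => ((hKs i).mul_left (μ i)).mul_right (2 * M))
        (by
          have heq : (fun i => ∑' j, μ i * K i j * (2 * M)) = fun i => μ i * (2 * M) := by
            funext i
            rw [show (fun j => μ i * K i j * (2 * M)) = fun j => μ i * (2 * M) * K i j from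
              funext fun j => by ring]
            rw [tsum_mul_left, hKrow i, mul_one]
          rw [heq]
          exact hμs.mul_right _)
      calc ∑' i, μ i * (∑' j, K i j * h j) = ∑' i, ∑' j, μ i * (K i j * h j) := by
            apply tsum_congr; intro i; rw [tsum_mul_left]
        _ = ∑' j, ∑' i, μ i * (K i j * h j) := hF.2.2
        _ = ∑' j, (∑' i, μ i * K i j) * h j := by
            apply tsum_congr; intro j
            rw [← tsum_mul_right]
            apply tsum_congr; intro i; ring
        _ = ∑' j, μ j * h j := by
            apply tsum_congr; intro j
            rw [(hinv j).tsum_eq]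
    have hπh : ∑' i, pi i * Ph i = ∑' i, pi i * h i := by
      rw [hPhdef]
      exact hswap pi P hπnn hπs hPnn hPs hProw hpiinv
    have hνh : ∑' i, nu i * Pth i = ∑' i, nu i * h i := by
      rw [hPthdef]
      exact hswap nu Pt hνnn hνs hPtnn hPts hPtrow hnuinv
    -- summabilities of weighted sums
    have hπhs : Summable fun i => pi i * h i := hmulbd pi h (2 * M) hπs hπnn hhM
    have hπPhs : Summable fun i => pi i * Ph i := hmulbd pi Ph (2 * M) hπs hπnn hPhM
    have hνhs : Summable fun i => nu i * h i := hmulbd nu h (2 * M) hνs hνnn hhM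
    have hνPhs : Summable fun i => nu i * Ph i := hmulbd nu Ph (2 * M) hνs hνnn hPhM
    have hνPths : Summable fun i => nu i * Pth i := hmulbd nu Pth (2 * M) hνs hνnn hPthM
    have hwabs : ∀ i, |h i - Ph i| ≤ 4 * M := by
      intro i
      calc |h i - Ph i| ≤ |h i| + |Ph i| := abs_sub _ _
        _ ≤ 4 * M := by linarith [hhM i, hPhM i]
    have hπws : Summable fun i => pi i * (h i - Ph i) :=
      hmulbd pi _ (4 * M) hπs hπnn hwabs
    have hνws : Summable fun i => nu i * (h i - Ph i) :=
      hmulbd nu _ (4 * M) hνs hνnn hwabs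
    have hfcabs : ∀ i, |f i - c| ≤ 2 := by
      intro i
      calc |f i - c| ≤ |f i| + |c| := abs_sub _ _
        _ ≤ 2 := by linarith [hf1 i, hc1]
    have hπfcs : Summable fun i => pi i * (f i - c) :=
      hmulbd pi _ 2 hπs hπnn hfcabs
    have hνfcs : Summable fun i => nu i * (f i - c) :=
      hmulbd nu _ 2 hνs hνnn hfcabs
    -- pi-weighted identities
    have hπw0 : ∑' i, pi i * (h i - Ph i) = 0 := by
      have heq : (fun i => pi i * (h i - Ph i)) = fun i => pi i * h i - pi i * Ph i := by
        funext i; ring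
      rw [heq, Summable.tsum_sub hπhs hπPhs, hπh, sub_self]
    have hπfc : ∑' i, pi i * (f i - c) = 0 := by
      have heq : (fun i => pi i * (f i - c)) = fun i => pi i * f i - pi i * c := by
        funext i; ring
      rw [heq, Summable.tsum_sub hπfs (hπs.mul_right c), tsum_mul_right, hπ1, one_mul, ← hcdef,
        sub_self]
    -- positivity of pi i₀
    have hπi₀pos : 0 < pi i₀ := by
      have hex : ∃ i, 0 < pi i := by
        by_contra hno
        push_neg at hno
        have hall : pi = fun _ => 0 := funext fun i => le_antisymm (hno i) (hπnn i)
        rw [hall, tsum_zero] at hπ1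
        norm_num at hπ1
      obtain ⟨i₂, hi₂⟩ := hex
      obtain ⟨n, _, hnpos⟩ := hPirr i₂ i₀
      have hinv := aux8_matPow_inv hPnn hPs hProw hπnn hπs hpiinv n i₀
      have hle : pi i₂ * matPow P n i₂ i₀ ≤ pi i₀ := by
        rw [← hinv.2]
        exact Summable.le_tsum hinv.1 i₂ fun j _ =>
          mul_nonneg (hπnn j) (aux8_matPow_nonneg hPnn n j i₀)
      exact lt_of_lt_of_le (mul_pos hi₂ hnpos) hle
    -- the Poisson equation holds everywhere
    have hwall : ∀ i, h i - Ph i = f i - c := by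
      have hkey : pi i₀ * ((h i₀ - Ph i₀) - (f i₀ - c)) = 0 := by
        have hfun : (fun i => pi i * (h i - Ph i) - pi i * (f i - c)) =
            fun i => if i = i₀ then pi i₀ * ((h i₀ - Ph i₀) - (f i₀ - c)) else 0 := by
          funext i
          by_cases hi : i = i₀
          · rw [if_pos hi, hi]; ring
          · rw [if_neg hi]
            have hgi : g i = f i - c := by simp only [hgdef, if_neg hi]
            have hfx := hfix i hi
            rw [hfx, hgi]; ring
        have hsub : ∑' i, (pi i * (h i - Ph i) - pi i * (f i - c)) = 0 := by
          rw [Summable.tsum_sub hπws hπfcs, hπw0, hπfc, sub_self]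
        rw [show (fun i => pi i * (h i - Ph i) - pi i * (f i - c)) =
          fun i => if i = i₀ then pi i₀ * ((h i₀ - Ph i₀) - (f i₀ - c)) else 0 from hfun]
          at hsub
        rwa [tsum_ite_eq i₀ _] at hsub
      have hX : (h i₀ - Ph i₀) - (f i₀ - c) = 0 := by
        rcases mul_eq_zero.mp hkey with h' | h'
        · exact absurd h' (ne_of_gt hπi₀pos)
        · exact h'
      intro i
      by_cases hi : i = i₀
      · rw [hi]; linarith
      · have hfx := hfix i hi
        have hgi : g i = f i - c := by simp only [hgdef, if_neg hi]
        rw [hfx, hgi]; ring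
    -- nu side bound
    have hdiffbd : ∀ i, |Pth i - Ph i| ≤ 2 * M * δ := by
      intro i
      have heq : Pth i - Ph i = ∑' j, (Pt i j - P i j) * h j := by
        rw [hPthdef, hPhdef, ← Summable.tsum_sub (hPths i) (hPhs i)]
        apply tsum_congr; intro j; ring
      rw [heq]
      have hΔh : Summable fun j => |(Pt i j - P i j) * h j| := by
        apply Summable.of_nonneg_of_le (fun j => abs_nonneg _) (fun j => ?_)
          ((hΔs i).mul_right (2 * M))
        rw [abs_mul]
        exact mul_le_mul_of_nonneg_left (hhM j) (abs_nonneg _)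
      calc |∑' j, (Pt i j - P i j) * h j| ≤ ∑' j, |(Pt i j - P i j) * h j| :=
            aux8_abs_tsum_le hΔh
        _ ≤ ∑' j, |Pt i j - P i j| * (2 * M) := by
            apply Summable.tsum_le_tsum (fun j => ?_) hΔh ((hΔs i).mul_right (2 * M))
            rw [abs_mul]
            exact mul_le_mul_of_nonneg_left (hhM j) (abs_nonneg _)
        _ = (∑' j, |Pt i j - P i j|) * (2 * M) := tsum_mul_right
        _ ≤ δ * (2 * M) := mul_le_mul_of_nonneg_right (hrowδ i) (by linarith)
        _ = 2 * M * δ := by ring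
    have hνdiffs : Summable fun i => nu i * (Pth i - Ph i) := by
      apply hmulbd nu _ (4 * M) hνs hνnn
      intro i
      calc |Pth i - Ph i| ≤ |Pth i| + |Ph i| := abs_sub _ _
        _ ≤ 4 * M := by linarith [hPthM i, hPhM i]
    have hνwle : ∑' i, nu i * (h i - Ph i) ≤ 2 * M * δ := by
      have h1 : ∑' i, nu i * (h i - Ph i) = ∑' i, nu i * (Pth i - Ph i) := by
        have e1 : (fun i => nu i * (h i - Ph i)) = fun i => nu i * h i - nu i * Ph i := by
          funext i; ring
        have e2 : (fun i => nu i * (Pth i - Ph i)) =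
            fun i => nu i * Pth i - nu i * Ph i := by
          funext i; ring
        rw [e1, e2, Summable.tsum_sub hνhs hνPhs, Summable.tsum_sub hνPths hνPhs, hνh]
      rw [h1]
      calc ∑' i, nu i * (Pth i - Ph i) ≤ ∑' i, nu i * (2 * M * δ) := by
            apply Summable.tsum_le_tsum (fun i => ?_) hνdiffs (hνs.mul_right _)
            exact mul_le_mul_of_nonneg_left ((le_abs_self _).trans (hdiffbd i)) (hνnn i)
        _ = (∑' i, nu i) * (2 * M * δ) := tsum_mul_right
        _ = 2 * M * δ := by rw [hν1, one_mul]
    -- left-hand side identity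
    have hLHS : vecNorm (fun i => nu i - pi i) = ∑' i, nu i * (h i - Ph i) := by
      have e0 : ∀ i, |nu i - pi i| = (nu i - pi i) * f i := by
        intro i
        simp only [hfdef]
        by_cases hlt : nu i - pi i < 0
        · rw [if_pos hlt, abs_of_neg hlt]; ring
        · rw [if_neg hlt, abs_of_nonneg (not_lt.mp hlt), mul_one]
      have hs1 : Summable fun i => (nu i - pi i) * (f i - c) := by
        apply Summable.of_abs
        apply Summable.of_nonneg_of_le (fun i => abs_nonneg _) (fun i => ?_)
          (((hνs.sub hπs).abs).mul_right 2)
        rw [abs_mul]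
        exact mul_le_mul_of_nonneg_left (hfcabs i) (abs_nonneg _)
      have hs2 : Summable fun i => (nu i - pi i) * c := (hνs.sub hπs).mul_right c
      unfold vecNorm
      calc ∑' i, |nu i - pi i| = ∑' i, (nu i - pi i) * f i := tsum_congr e0
        _ = ∑' i, ((nu i - pi i) * (f i - c) + (nu i - pi i) * c) := by
            apply tsum_congr; intro i; ring
        _ = ∑' i, (nu i - pi i) * (f i - c) + ∑' i, (nu i - pi i) * c :=
            Summable.tsum_add hs1 hs2
        _ = ∑' i, (nu i - pi i) * (f i - c) := by
            rw [tsum_mul_right, Summable.tsum_sub hνs hπs, hν1, hπ1, sub_self, zero_mul, add_zero]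
        _ = ∑' i, (nu i * (f i - c) - pi i * (f i - c)) := by
            apply tsum_congr; intro i; ring
        _ = ∑' i, nu i * (f i - c) - ∑' i, pi i * (f i - c) := Summable.tsum_sub hνfcs hπfcs
        _ = ∑' i, nu i * (f i - c) := by rw [hπfc, sub_zero]
        _ = ∑' i, nu i * (h i - Ph i) := by
            apply tsum_congr; intro i; rw [hwall i]
    rw [hLHS]
    calc ∑' i, nu i * (h i - Ph i) ≤ 2 * M * δ := hνwle
      _ ≤ 2 * M ^ 2 * δ := by
        have hkey : 0 ≤ M * ((M - 1) * δ) :=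
          mul_nonneg hMnn (mul_nonneg (by linarith) hδnn)
        nlinarith [hkey]


end
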